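/- arXiv:2601.08583 — 2 statements merged into one kernel-verified Lean document; each statement's English description precedes it below -/
import Mathlib

section
/- For integers m ≥ 3, d_1 ≤ d_2 ≤ ... ≤ d_m and positive integers ε_1, ..., ε_{m-2}, set t = ε_1 + ... + ε_{m-2}, d = d_1 + d_2 + 1 − t, τ = d_1² + d_1d_2 + d_2² − t(d_1 + d_2) − Σ_{j=1}^{m-2} ε_j d_{j+2} + Σ_{1≤i<j≤m-2} ε_i ε_j, and τ'_max = (d−1)² − d_1(d − d_1 − 1) − (2d_1 + 2 − d)(2d_1 + 1 − d)/2. Assume 2d_1 ≥ d. Then τ = τ'_max if and only if d_1 = d_2 = ... = d_m and ε_1 = ... = ε_{m-2} = 1; moreover, in that case m = 2d_1 − d + 3. -/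
open Finset

lemma sq_sum_aux (e : ℕ → ℤ) : ∀ n : ℕ, (∑ i ∈ Icc 1 n, e i)^2 = ∑ i ∈ Icc 1 n, (e i)^2 + 2 * ∑ i ∈ Icc 1 n, ∑ j ∈ Icc (i+1) n, e i * e j := by
  intro n
  induction n with
  | zero => simp
  | succ n ih =>
    rw [Finset.sum_Icc_succ_top (by omega : (1:ℕ) ≤ n+1),
        Finset.sum_Icc_succ_top (by omega : (1:ℕ) ≤ n+1),
        Finset.sum_Icc_succ_top (by omega : (1:ℕ) ≤ n+1)]
    have hinner : ∑ i ∈ Icc 1 n, ∑ j ∈ Icc (i+1) (n+1), e i * e j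
        = ∑ i ∈ Icc 1 n, (∑ j ∈ Icc (i+1) n, e i * e j + e i * e (n+1)) := by
      apply Finset.sum_congr rfl
      intro i hi
      simp only [Finset.mem_Icc] at hi
      rw [Finset.sum_Icc_succ_top (by omega)]
    rw [hinner, Finset.sum_add_distrib, ← Finset.sum_mul,
        show Icc (n+1+1) (n+1) = ∅ from Icc_eq_empty (by omega)]
    simp only [Finset.sum_empty]
    linear_combination ih

set_option maxHeartbeats 1600000 in
/-- Corollary 5.5 (maximal Tjurina curves): `τ = τ'_max` iff all exponents
are equal and all `εⱼ = 1`; moreover, in that case `m = 2d₁ − d + 3`. -/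
theorem maximal_Tjurina_characterization (m : ℕ) (hm : 3 ≤ m) (d ε : ℕ → ℤ)
    (hsort : ∀ i ∈ Icc 1 m, ∀ j ∈ Icc 1 m, i ≤ j → d i ≤ d j)
    (hε : ∀ j ∈ Icc 1 (m - 2), 0 < ε j)
    (t : ℤ) (ht : t = ∑ j ∈ Icc 1 (m - 2), ε j)
    (D : ℤ) (hD : D = d 1 + d 2 + 1 - t)
    (τ : ℤ)
    (hτ : τ = (d 1) ^ 2 + d 1 * d 2 + (d 2) ^ 2 - t * (d 1 + d 2)
        - ∑ j ∈ Icc 1 (m - 2), ε j * d (j + 2)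
        + ∑ i ∈ Icc 1 (m - 2), ∑ j ∈ Icc (i + 1) (m - 2), ε i * ε j)
    (τmax' : ℚ)
    (hτmax' : τmax' = ((D : ℚ) - 1) ^ 2 - (d 1 : ℚ) * ((D : ℚ) - d 1 - 1)
        - (2 * (d 1 : ℚ) + 2 - D) * (2 * (d 1 : ℚ) + 1 - D) / 2)
    (h2d1 : D ≤ 2 * d 1) :
    ((τ : ℚ) = τmax' ↔
      (∀ i ∈ Icc 1 m, d i = d 1) ∧ (∀ j ∈ Icc 1 (m - 2), ε j = 1)) ∧
    ((τ : ℚ) = τmax' → (m : ℤ) = 2 * d 1 - D + 3) := by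
  -- integer form of 2 * τmax'
  obtain ⟨TZ, hTZ⟩ : ∃ x : ℤ,
      x = 2*(D-1)^2 - 2*(d 1)*(D - d 1 - 1) - (2*(d 1)+2-D)*(2*(d 1)+1-D) := ⟨_, rfl⟩
  have hcast : (TZ : ℚ) = 2 * τmax' := by
    rw [hτmax', hTZ]; push_cast; ring
  have hiff : ((τ : ℚ) = τmax') ↔ TZ = 2 * τ := by
    constructor
    · intro h
      have h2 : (TZ : ℚ) = ((2*τ : ℤ) : ℚ) := by push_cast; rw [hcast, h]
      exact_mod_cast h2
    · intro h
      have h2 : ((2:ℚ) * τ) = 2 * τmax' := by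
        rw [← hcast, h]; push_cast; ring
      linarith
  -- abbreviations (opaque)
  obtain ⟨S1, hS1⟩ : ∃ x : ℤ, (∑ j ∈ Icc 1 (m-2), ε j) = x := ⟨_, rfl⟩
  obtain ⟨S2, hS2⟩ : ∃ x : ℤ, (∑ j ∈ Icc 1 (m-2), (ε j)^2) = x := ⟨_, rfl⟩
  obtain ⟨Sd, hSd⟩ : ∃ x : ℤ, (∑ j ∈ Icc 1 (m-2), ε j * d (j+2)) = x := ⟨_, rfl⟩
  obtain ⟨P, hP⟩ : ∃ x : ℤ, (∑ i ∈ Icc 1 (m-2), ∑ j ∈ Icc (i+1) (m-2), ε i * ε j) = x :=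
    ⟨_, rfl⟩
  have hsq := sq_sum_aux ε (m-2)
  rw [hS1, hS2, hP] at hsq
  rw [hS1] at ht
  rw [hSd, hP] at hτ
  have hArw : (∑ j ∈ Icc 1 (m-2), ε j * (d (j+2) - d 2)) = Sd - d 2 * S1 := by
    rw [← hSd, ← hS1, Finset.mul_sum, ← Finset.sum_sub_distrib]
    exact Finset.sum_congr rfl fun j _ => by ring
  have hBrw : (∑ j ∈ Icc 1 (m-2), ((ε j)^2 - ε j)) = S2 - S1 := by
    rw [← hS2, ← hS1, ← Finset.sum_sub_distrib]
  -- key identity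
  have key : TZ - 2 * τ = 2 * (Sd - d 2 * S1) + (S2 - S1)
      + (d 2 - d 1) * (2 * S1 - (d 2 - d 1) + 1) := by
    rw [hTZ, hτ, hD, ht]
    linear_combination hsq
  -- nonnegativity facts
  have hAnn : 0 ≤ Sd - d 2 * S1 := by
    rw [← hArw]
    apply Finset.sum_nonneg
    intro j hj
    have h1 : (0:ℤ) < ε j := hε j hj
    simp only [Finset.mem_Icc] at hj
    have h2 : d 2 ≤ d (j+2) :=
      hsort 2 (by simp only [Finset.mem_Icc]; omega) (j+2)
        (by simp only [Finset.mem_Icc]; omega) (by omega)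
    nlinarith
  have hBnn : 0 ≤ S2 - S1 := by
    rw [← hBrw]
    apply Finset.sum_nonneg
    intro j hj
    have h1 : (1:ℤ) ≤ ε j := hε j hj
    nlinarith
  have hsnn : 0 ≤ d 2 - d 1 := by
    have := hsort 1 (by simp only [Finset.mem_Icc]; omega) 2
      (by simp only [Finset.mem_Icc]; omega) (by omega)
    linarith
  have hS1pos : (1:ℤ) ≤ S1 := by
    have hmem : (1:ℕ) ∈ Icc 1 (m-2) := by simp only [Finset.mem_Icc]; omega
    rw [← hS1]
    calc (1:ℤ) ≤ ε 1 := hε 1 hmem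
      _ ≤ _ := Finset.single_le_sum (fun j hj => le_of_lt (hε j hj)) hmem
  have hDs : D = d 1 + d 2 + 1 - S1 := by rw [hD, ht]
  have hsle : d 2 - d 1 ≤ S1 - 1 := by
    rw [hDs] at h2d1; linarith
  have hCnn : 0 ≤ (d 2 - d 1) * (2 * S1 - (d 2 - d 1) + 1) := by nlinarith
  have main : ((τ : ℚ) = τmax') ↔
      (∀ i ∈ Icc 1 m, d i = d 1) ∧ (∀ j ∈ Icc 1 (m - 2), ε j = 1) := by
    rw [hiff]
    constructor
    · intro heq
      have hA0 : Sd - d 2 * S1 = 0 := by linarith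
      have hB0 : S2 - S1 = 0 := by linarith
      have hC0 : (d 2 - d 1) * (2 * S1 - (d 2 - d 1) + 1) = 0 := by linarith
      have hs0 : d 2 - d 1 = 0 := by
        rcases mul_eq_zero.mp hC0 with h | h
        · exact h
        · linarith
      rw [← hArw] at hA0
      rw [← hBrw] at hB0
      have hAnn' : ∀ i ∈ Icc 1 (m-2), (0:ℤ) ≤ ε i * (d (i+2) - d 2) := by
        intro i hi
        have h1 : (0:ℤ) < ε i := hε i hi
        simp only [Finset.mem_Icc] at hi
        have h2 : d 2 ≤ d (i+2) :=
          hsort 2 (by simp only [Finset.mem_Icc]; omega) (i+2)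
            (by simp only [Finset.mem_Icc]; omega) (by omega)
        nlinarith
      have hd2 : ∀ j ∈ Icc 1 (m-2), d (j+2) = d 2 := by
        intro j hj
        have hterm := (Finset.sum_eq_zero_iff_of_nonneg hAnn').mp hA0 j hj
        have h1 : (0:ℤ) < ε j := hε j hj
        rcases mul_eq_zero.mp hterm with h | h
        · linarith
        · linarith
      have hBnn' : ∀ i ∈ Icc 1 (m-2), (0:ℤ) ≤ (ε i)^2 - ε i := by
        intro i hi
        have h1 : (1:ℤ) ≤ ε i := hε i hi
        nlinarith
      have hε1 : ∀ j ∈ Icc 1 (m-2), ε j = 1 := by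
        intro j hj
        have hterm := (Finset.sum_eq_zero_iff_of_nonneg hBnn').mp hB0 j hj
        have h1 : (1:ℤ) ≤ ε j := hε j hj
        nlinarith
      refine ⟨?_, hε1⟩
      intro i hi
      simp only [Finset.mem_Icc] at hi
      obtain ⟨hi1, hi2⟩ := hi
      rcases Nat.lt_or_ge i 3 with h3 | h3
      · interval_cases i
        · rfl
        · linarith
      · have hj : i - 2 ∈ Icc 1 (m-2) := by simp only [Finset.mem_Icc]; omega
        have h4 := hd2 (i-2) hj
        rw [show i - 2 + 2 = i by omega] at h4
        linarith
    · rintro ⟨hall, hone⟩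
      have hd2 : d 2 = d 1 := hall 2 (by simp only [Finset.mem_Icc]; omega)
      have hA0 : Sd - d 2 * S1 = 0 := by
        rw [← hArw]
        apply Finset.sum_eq_zero
        intro j hj
        simp only [Finset.mem_Icc] at hj
        have h1 : d (j+2) = d 1 := hall (j+2) (by simp only [Finset.mem_Icc]; omega)
        rw [h1, hd2]; ring
      have hB0 : S2 - S1 = 0 := by
        rw [← hBrw]
        apply Finset.sum_eq_zero
        intro j hj
        rw [hone j hj]; ring
      have hC0 : (d 2 - d 1) * (2 * S1 - (d 2 - d 1) + 1) = 0 := by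
        rw [hd2]; ring
      linarith
  refine ⟨main, ?_⟩
  intro heq
  obtain ⟨hall, hone⟩ := main.mp heq
  have hd2 : d 2 = d 1 := hall 2 (by simp only [Finset.mem_Icc]; omega)
  have hS1m : S1 = ((m - 2 : ℕ) : ℤ) := by
    rw [← hS1, Finset.sum_congr rfl hone, Finset.sum_const, Nat.card_Icc]
    simp
  rw [hd2, hS1m] at hDs
  omega
end

section
/- For integers m ≥ 3, d_1 ≤ d_2 ≤ ... ≤ d_m and positive integers ε_1, ..., ε_{m-2}, set t = ε_1 + ... + ε_{m-2}, d = d_1 + d_2 + 1 − t, τ = d_1² + d_1d_2 + d_2² − t(d_1 + d_2) − Σ_{j=1}^{m-2} ε_j d_{j+2} + Σ_{1≤i<j≤m-2} ε_i ε_j, and τ_max = (d−1)² − d_1(d − d_1 − 1). Then τ_max − τ = 1 if and only if m = 3, ε_1 = 1 and d_2 = d_3. -/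
open Finset

private lemma sq_sum_Icc (ε : ℕ → ℤ) : ∀ n : ℕ,
    (∑ j ∈ Icc 1 n, ε j) ^ 2 =
      ∑ j ∈ Icc 1 n, (ε j) ^ 2 +
        2 * ∑ i ∈ Icc 1 n, ∑ j ∈ Icc (i + 1) n, ε i * ε j := by
  intro n
  induction n with
  | zero => simp
  | succ n ih =>
    have hins : Icc 1 (n + 1) = insert (n + 1) (Icc 1 n) := by
      ext x; simp [Finset.mem_Icc, Finset.mem_insert]; omega
    have hinner : ∀ i ∈ Icc 1 n,
        ∑ j ∈ Icc (i + 1) (n + 1), ε i * ε j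
          = ε i * ε (n + 1) + ∑ j ∈ Icc (i + 1) n, ε i * ε j := by
      intro i hi
      have hi' : i ≤ n := (Finset.mem_Icc.mp hi).2
      have : Icc (i + 1) (n + 1) = insert (n + 1) (Icc (i + 1) n) := by
        ext x; simp [Finset.mem_Icc, Finset.mem_insert]; omega
      rw [this, Finset.sum_insert (by simp)]
    have hnotmem : (n + 1) ∉ Icc 1 n := by simp
    rw [hins, Finset.sum_insert hnotmem, Finset.sum_insert hnotmem,
      Finset.sum_insert hnotmem, Finset.sum_congr rfl hinner,
      Finset.sum_add_distrib, ← Finset.sum_mul]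
    have hempty : Icc (n + 1 + 1) (n + 1) = (∅ : Finset ℕ) := by
      apply Finset.Icc_eq_empty; omega
    rw [hempty]
    simp only [Finset.sum_empty]
    ring_nf
    ring_nf at ih
    linarith [ih]

/-- Corollary 5.4 (1) (nearly free curves): `τ_max − τ = 1` iff `m = 3`,
`ε₁ = 1` and `d₂ = d₃`. -/
theorem nearly_free_characterization (m : ℕ) (hm : 3 ≤ m) (d ε : ℕ → ℤ)
    (hsort : ∀ i ∈ Icc 1 m, ∀ j ∈ Icc 1 m, i ≤ j → d i ≤ d j)
    (hε : ∀ j ∈ Icc 1 (m - 2), 0 < ε j)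
    (t : ℤ) (ht : t = ∑ j ∈ Icc 1 (m - 2), ε j)
    (D : ℤ) (hD : D = d 1 + d 2 + 1 - t)
    (τ : ℤ)
    (hτ : τ = (d 1) ^ 2 + d 1 * d 2 + (d 2) ^ 2 - t * (d 1 + d 2)
        - ∑ j ∈ Icc 1 (m - 2), ε j * d (j + 2)
        + ∑ i ∈ Icc 1 (m - 2), ∑ j ∈ Icc (i + 1) (m - 2), ε i * ε j)
    (τmax : ℤ) (hτmax : τmax = (D - 1) ^ 2 - d 1 * (D - d 1 - 1)) :
    τmax - τ = 1 ↔ m = 3 ∧ ε 1 = 1 ∧ d 2 = d 3 := by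
  set B := ∑ i ∈ Icc 1 (m - 2), ∑ j ∈ Icc (i + 1) (m - 2), ε i * ε j with hB
  have h1 : τmax - τ = t ^ 2 - t * d 2 + (∑ j ∈ Icc 1 (m - 2), ε j * d (j + 2)) - B := by
    rw [hτmax, hτ, hD]; ring
  have h2 : τmax - τ =
      (∑ j ∈ Icc 1 (m - 2), ((ε j) ^ 2 + ε j * (d (j + 2) - d 2))) + B := by
    rw [h1, ht, sq_sum_Icc, Finset.sum_mul, ← hB]
    rw [Finset.sum_add_distrib]
    have : ∑ j ∈ Icc 1 (m - 2), ε j * (d (j + 2) - d 2)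
        = ∑ j ∈ Icc 1 (m - 2), ε j * d (j + 2) - ∑ j ∈ Icc 1 (m - 2), ε j * d 2 := by
      rw [← Finset.sum_sub_distrib]
      exact Finset.sum_congr rfl fun j _ => by ring
    rw [this]; ring
  have hone : ∀ j ∈ Icc 1 (m - 2), (1 : ℤ) ≤ (ε j) ^ 2 + ε j * (d (j + 2) - d 2) := by
    intro j hj
    have hj' := Finset.mem_Icc.mp hj
    have hεj := hε j hj
    have hd2 : d 2 ≤ d (j + 2) := by
      apply hsort 2 (by simp [Finset.mem_Icc]; omega) (j + 2)
        (by simp [Finset.mem_Icc]; omega) (by omega)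
    nlinarith
  have hBnn : (0 : ℤ) ≤ B := by
    apply Finset.sum_nonneg
    intro i hi
    apply Finset.sum_nonneg
    intro j hj
    have hi' := Finset.mem_Icc.mp hi
    have hj' := Finset.mem_Icc.mp hj
    have h1 := hε i hi
    have h2 := hε j (by simp [Finset.mem_Icc]; omega)
    positivity
  constructor
  · intro h
    by_cases hm3 : m = 3
    · subst hm3
      have hIcc : Icc 1 (3 - 2) = {1} := rfl
      rw [hIcc] at h2 hB
      have hBz : B = 0 := by
        rw [hB, Finset.sum_singleton]
        simp
      rw [Finset.sum_singleton, hBz] at h2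
      have hε1 := hε 1 (by rw [hIcc]; simp)
      have hd23 : d 2 ≤ d 3 := by
        apply hsort 2 (by simp [Finset.mem_Icc]) 3 (by simp [Finset.mem_Icc]) (by omega)
      have he1 : ε 1 = 1 := by nlinarith
      refine ⟨rfl, he1, ?_⟩
      rw [he1] at h2
      have : d 2 = d (1 + 2) := by nlinarith
      simpa using this
    · exfalso
      have hcard : 2 ≤ m - 2 := by omega
      have hsum : ((m - 2 : ℕ) : ℤ) ≤
          ∑ j ∈ Icc 1 (m - 2), ((ε j) ^ 2 + ε j * (d (j + 2) - d 2)) := by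
        have := Finset.card_nsmul_le_sum (Icc 1 (m - 2)) _ (1 : ℤ) hone
        simpa [Nat.card_Icc] using this
      have : (2 : ℤ) ≤ ((m - 2 : ℕ) : ℤ) := by exact_mod_cast hcard
      linarith
  · rintro ⟨hm3, hε1, hd⟩
    subst hm3
    have hIcc : Icc 1 (3 - 2) = {1} := rfl
    rw [hIcc] at h2 hB
    have hBz : B = 0 := by
      rw [hB, Finset.sum_singleton]
      simp
    rw [Finset.sum_singleton, hBz] at h2
    rw [h2, hε1]
    have : d (1 + 2) = d 2 := by rw [← hd]
    rw [this]; ring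
end
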